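/- Let f be holomorphic on D_R with f(D_R) ⊆ G, where G ⊆ ℂ is a domain with convex hull G̃ ≠ ℂ. Then for every n ≥ 1 and every z with |z| = r < R, |f^{(n)}(z)| ≤ (2 n! R) / (R - r)^{n+1} · dist(f(0), ∂G̃). -/

import Mathlib

open Complex Metric
open Real

private lemma sphere_subset_ball' {s R : ℝ} (hs : 0 < s) (hsR : s < R) :
    sphere (0:ℂ) s ⊆ ball (0:ℂ) R := fun w hw => by
  rw [mem_sphere_zero_iff_norm] at hw
  rw [mem_ball_zero_iff, hw]; exact hsR

private lemma circleIntegral_add {f g : ℂ → ℂ} {c : ℂ} {R : ℝ} (hf : CircleIntegrable f c R)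
    (hg : CircleIntegrable g c R) :
    (∮ w in C(c, R), (f w + g w)) = (∮ w in C(c, R), f w) + ∮ w in C(c, R), g w := by
  simp only [circleIntegral, smul_add]
  exact intervalIntegral.integral_add hf.out hg.out

private lemma dslope_differentiableOn {R : ℝ} {h : ℂ → ℂ} {z : ℂ}
    (hd : DifferentiableOn ℂ h (ball (0:ℂ) R)) (hz : z ∈ ball (0:ℂ) R) :
    DifferentiableOn ℂ (dslope h z) (ball (0:ℂ) R) := by
  intro x hx
  rcases eq_or_ne x z with rfl | hne
  · obtain ⟨p, hp⟩ := hd.analyticAt (isOpen_ball.mem_nhds hx)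
    exact hp.has_fpower_series_dslope_fslope.analyticAt.differentiableAt.differentiableWithinAt
  · exact (differentiableWithinAt_dslope_of_ne hne).2 (hd x hx)

private lemma iteratedDeriv_succ_dslope' (h : ℂ → ℂ) (z : ℂ) (hA : AnalyticAt ℂ h z) (n : ℕ) :
    iteratedDeriv (n + 1) h z = (n + 1 : ℂ) * iteratedDeriv n (dslope h z) z := by
  obtain ⟨p, hp⟩ := hA
  have hq := hp.has_fpower_series_dslope_fslope
  obtain ⟨rp, hpb⟩ := hp
  obtain ⟨rq, hqb⟩ := hq
  have h1 := hpb.factorial_smul (1 : ℂ) (n + 1)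
  have h2 := hqb.factorial_smul (1 : ℂ) n
  rw [← iteratedDeriv_eq_iteratedFDeriv] at h1 h2
  have hc : p.fslope n (fun _ ↦ (1:ℂ)) = p (n + 1) (fun _ ↦ (1:ℂ)) :=
    FormalMultilinearSeries.coeff_fslope (p := p) (n := n)
  rw [hc] at h2
  rw [← h1, ← h2, nsmul_eq_mul, nsmul_eq_mul]
  push_cast [Nat.factorial_succ]
  ring

private lemma cauchy_formula (R : ℝ) :
    ∀ (n : ℕ) (h : ℂ → ℂ), DifferentiableOn ℂ h (ball (0:ℂ) R) →
    ∀ (s : ℝ), 0 < s → s < R → ∀ z : ℂ, ‖z‖ < s →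
    (∮ w in C(0, s), ((w - z) ^ (-(n+1) : ℤ)) • h w)
      = ((2 * (π:ℝ) * I) / (n.factorial : ℂ)) • iteratedDeriv n h z := by
  intro n
  induction n with
  | zero =>
    intro h hd s hs hsR z hz
    have hzb : z ∈ ball (0:ℂ) s := mem_ball_zero_iff.2 hz
    have hsub : closedBall (0:ℂ) s ⊆ ball (0:ℂ) R := closedBall_subset_ball hsR
    have hC : (∮ w in C(0, s), (w - z)⁻¹ • h w) = (2 * ↑π * I) • h z :=
      Complex.circleIntegral_sub_inv_smul_of_differentiable_on_off_countable
        Set.countable_empty hzb (hd.continuousOn.mono hsub)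
        (fun x hx => hd.differentiableAt
          (isOpen_ball.mem_nhds (hsub (ball_subset_closedBall hx.1))))
    have he : ∀ w : ℂ, (w - z) ^ (-((0:ℕ)+1) : ℤ) = (w - z)⁻¹ := by
      intro w; norm_num
    simp only [he]
    rw [hC]
    simp [iteratedDeriv_zero]
  | succ n ih =>
    intro h hd s hs hsR z hz
    have hzR : z ∈ ball (0:ℂ) R := mem_ball_zero_iff.2 (hz.trans hsR)
    set D := dslope h z with hDdef
    have hDd : DifferentiableOn ℂ D (ball (0:ℂ) R) := dslope_differentiableOn hd hzR
    have hsub2 : sphere (0:ℂ) s ⊆ ball (0:ℂ) R := sphere_subset_ball' hs hsR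
    have hwz : ∀ w ∈ sphere (0:ℂ) s, w - z ≠ 0 := by
      intro w hw
      rw [mem_sphere_zero_iff_norm] at hw
      rw [sub_ne_zero]
      rintro rfl
      exact absurd hw (ne_of_lt hz)
    have key : Set.EqOn (fun w => ((w - z) ^ (-(↑(n+1)+1) : ℤ)) • h w)
        (fun w => (h z) • ((w - z) ^ (-(↑(n+1)+1) : ℤ)) + ((w - z) ^ (-(↑n+1) : ℤ)) • D w)
        (sphere (0:ℂ) s) := by
      intro w hw
      have hne := hwz w hw
      have hhw : h w = h z + (w - z) * D w := by
        have hsd := sub_smul_dslope h z w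
        rw [smul_eq_mul, ← hDdef] at hsd
        linear_combination -hsd
      have hzp : (w - z) ^ (-(↑(n+1)+1) : ℤ) * (w - z) = (w - z) ^ (-(↑n+1) : ℤ) := by
        have he2 : (-(↑(n+1)+1) : ℤ) + 1 = (-(↑n+1) : ℤ) := by push_cast; ring
        rw [← he2, zpow_add_one₀ hne]
      simp only [smul_eq_mul]
      rw [hhw]
      linear_combination (D w) * hzp
    rw [circleIntegral.integral_congr hs.le key]
    have hKcont : ContinuousOn (fun w : ℂ => (w - z) ^ (-(↑(n+1)+1) : ℤ)) (sphere (0:ℂ) s) :=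
      (continuousOn_id.sub continuousOn_const).zpow₀ _ (fun w hw => Or.inl (hwz w hw))
    have hK2cont : ContinuousOn (fun w : ℂ => (w - z) ^ (-(↑n+1) : ℤ)) (sphere (0:ℂ) s) :=
      (continuousOn_id.sub continuousOn_const).zpow₀ _ (fun w hw => Or.inl (hwz w hw))
    have int1 : CircleIntegrable (fun w => (h z) • ((w - z) ^ (-(↑(n+1)+1) : ℤ))) 0 s :=
      (continuousOn_const.fun_smul hKcont).circleIntegrable hs.le
    have int2 : CircleIntegrable (fun w => ((w - z) ^ (-(↑n+1) : ℤ)) • D w) 0 s :=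
      (hK2cont.smul (hDd.continuousOn.mono hsub2)).circleIntegrable hs.le
    rw [circleIntegral_add int1 int2]
    have hz1 : (∮ w in C(0, s), (h z) • ((w - z) ^ (-(↑(n+1)+1) : ℤ))) = 0 := by
      rw [circleIntegral.integral_smul]
      rw [circleIntegral.integral_sub_zpow_of_ne (by omega : (-(↑(n+1)+1) : ℤ) ≠ -1)]
      simp
    rw [hz1, zero_add, ih D hDd s hs hsR z hz]
    rw [iteratedDeriv_succ_dslope' h z (hd.analyticAt (isOpen_ball.mem_nhds hzR)) n]
    rw [smul_eq_mul, smul_eq_mul]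
    have hfac : ((n+1).factorial : ℂ) ≠ 0 := by
      exact_mod_cast Nat.cast_ne_zero.mpr (Nat.factorial_ne_zero (n+1))
    have hfacn : ((n).factorial : ℂ) ≠ 0 := by
      exact_mod_cast Nat.cast_ne_zero.mpr (Nat.factorial_ne_zero n)
    field_simp
    push_cast [Nat.factorial_succ]
    ring

private lemma intervalIntegral_conj' {f : ℝ → ℂ} {a b : ℝ} :
    ∫ x in a..b, (starRingEnd ℂ) (f x) = (starRingEnd ℂ) (∫ x in a..b, f x) := by
  rw [intervalIntegral, intervalIntegral, map_sub, ← integral_conj, ← integral_conj]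

private lemma conj_integral_zero (R s : ℝ) (hs : 0 < s) (hsR : s < R) (h : ℂ → ℂ)
    (hd : DifferentiableOn ℂ h (ball (0:ℂ) R)) (z : ℂ) (hz : ‖z‖ < s) (m : ℕ) :
    (∮ w in C(0, s), ((w - z) ^ (-(↑(m+1)+1) : ℤ)) • (starRingEnd ℂ) (h w)) = 0 := by
  have hz0 : 0 ≤ ‖z‖ := norm_nonneg z
  have hzpow : ∀ x : ℂ, x ^ (-(↑(m+1)+1) : ℤ) = (x^(m+2))⁻¹ := by
    intro x
    have he : (-(↑(m+1)+1) : ℤ) = -((m+2 : ℕ) : ℤ) := by push_cast; ring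
    rw [he, zpow_neg, zpow_natCast]
  set G : ℂ → ℂ := fun w =>
    -((s:ℂ)^2 * w^m * (((s:ℂ)^2 - (starRingEnd ℂ) z * w)^(m+2))⁻¹ * h w) with hGdef
  have hden : ∀ w : ℂ, ‖w‖ ≤ s → ((s:ℂ)^2 - (starRingEnd ℂ) z * w) ≠ 0 := by
    intro w hw hcon
    have h1 : ‖(starRingEnd ℂ) z * w‖ < s^2 := by
      rw [norm_mul, RCLike.norm_conj]
      calc ‖z‖ * ‖w‖ ≤ ‖z‖ * s := mul_le_mul_of_nonneg_left hw hz0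
        _ < s * s := mul_lt_mul_of_pos_right hz hs
        _ = s ^ 2 := by ring
    rw [sub_eq_zero] at hcon
    have h2 : ‖((s:ℂ)^2)‖ = s^2 := by
      rw [← ofReal_pow, Complex.norm_real]
      exact abs_of_nonneg (by positivity)
    rw [← hcon, h2] at h1
    exact lt_irrefl _ h1
  have hGzero : (∮ w in C(0, s), G w) = 0 := by
    apply Complex.circleIntegral_eq_zero_of_differentiable_on_off_countable hs.le
      Set.countable_empty
    · apply ContinuousOn.neg
      apply ContinuousOn.mul
      · apply ContinuousOn.mul
        · exact continuousOn_const.mul (continuousOn_pow m)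
        · apply ContinuousOn.inv₀
          · exact (continuousOn_const.sub (continuousOn_const.mul continuousOn_id)).pow _
          · intro w hw
            exact pow_ne_zero _ (hden w (by simpa [mem_closedBall_zero_iff] using hw))
      · exact hd.continuousOn.mono (closedBall_subset_ball hsR)
    · intro w hw
      have hw' : w ∈ ball (0:ℂ) s := hw.1
      have hwR : w ∈ ball (0:ℂ) R := ball_subset_ball hsR.le hw'
      apply DifferentiableAt.neg
      apply DifferentiableAt.mul
      · apply DifferentiableAt.mul
        · exact (differentiableAt_const _).mul (differentiableAt_pow m)
        · apply DifferentiableAt.inv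
          · exact ((differentiableAt_const _).sub
              ((differentiableAt_const _).mul differentiableAt_id)).pow _
          · exact pow_ne_zero _ (hden w (mem_ball_zero_iff.1 hw').le)
      · exact hd.differentiableAt (isOpen_ball.mem_nhds hwR)
  have step : ∀ θ : ℝ,
      deriv (circleMap 0 s) θ • ((circleMap 0 s θ - z) ^ (-(↑(m+1)+1) : ℤ)) •
        (starRingEnd ℂ) (h (circleMap 0 s θ))
      = (starRingEnd ℂ) (deriv (circleMap 0 s) θ • G (circleMap 0 s θ)) := by
    intro θ
    set w := circleMap 0 s θ with hwdef
    have hwnorm : ‖w‖ = s := by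
      rw [hwdef, norm_circleMap_zero, abs_of_pos hs]
    have hw0 : w ≠ 0 := by
      intro hcon; rw [hcon] at hwnorm; simp at hwnorm; exact hs.ne hwnorm
    have hwz : w - z ≠ 0 := by
      rw [sub_ne_zero]; rintro rfl; exact absurd hwnorm (ne_of_lt hz)
    have hconjw : (starRingEnd ℂ) w * w = (s:ℂ)^2 := by
      rw [mul_comm, Complex.mul_conj, Complex.normSq_eq_norm_sq]
      norm_cast
      rw [hwnorm]
    have hdenw : ((s:ℂ)^2 - (starRingEnd ℂ) z * w) ≠ 0 := hden w hwnorm.le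
    have hcwz : (starRingEnd ℂ) w - (starRingEnd ℂ) z ≠ 0 := by
      rw [← map_sub]
      exact fun hc => hwz (by simpa using congrArg (starRingEnd ℂ) hc)
    suffices hstep2 : (starRingEnd ℂ) (deriv (circleMap 0 s) θ •
        ((w - z) ^ (-(↑(m+1)+1) : ℤ)) • (starRingEnd ℂ) (h w)) =
        deriv (circleMap 0 s) θ • G w by
      rw [← hstep2, Complex.conj_conj]
    rw [deriv_circleMap, ← hwdef]
    simp only [smul_eq_mul, hGdef, hzpow, map_mul, map_inv₀, map_pow, map_sub,
      Complex.conj_conj, Complex.conj_I]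
    have e1 : ((s:ℂ)^2 - (starRingEnd ℂ) z * w) = ((starRingEnd ℂ) w - (starRingEnd ℂ) z) * w := by
      linear_combination -hconjw
    rw [e1, mul_pow]
    field_simp
    linear_combination (-(h w * w^(m+1))) * hconjw
  calc (∮ w in C(0, s), ((w - z) ^ (-(↑(m+1)+1) : ℤ)) • (starRingEnd ℂ) (h w))
      = ∫ θ in (0:ℝ)..2*π, (starRingEnd ℂ) (deriv (circleMap 0 s) θ • G (circleMap 0 s θ)) := by
        apply intervalIntegral.integral_congr
        intro θ _
        exact step θ
    _ = (starRingEnd ℂ) (∫ θ in (0:ℝ)..2*π, deriv (circleMap 0 s) θ • G (circleMap 0 s θ)) :=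
        intervalIntegral_conj'
    _ = (starRingEnd ℂ) (∮ w in C(0, s), G w) := rfl
    _ = 0 := by rw [hGzero]; simp

private lemma mean_value'' (R s : ℝ) (hs : 0 < s) (hsR : s < R) (h : ℂ → ℂ)
    (hd : DifferentiableOn ℂ h (ball (0:ℂ) R)) :
    ∫ θ in (0:ℝ)..2*π, (h (circleMap 0 s θ)).re = 2 * π * (h 0).re := by
  have hcont : Continuous fun θ : ℝ => h (circleMap 0 s θ) := by
    rw [← continuousOn_univ]
    apply (hd.continuousOn.comp (continuous_circleMap 0 s).continuousOn)
    intro θ _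
    have hcn : ‖circleMap 0 s θ‖ = s := by
      rw [norm_circleMap_zero, abs_of_pos hs]
    show circleMap 0 s θ ∈ ball (0:ℂ) R
    rw [mem_ball_zero_iff, hcn]; exact hsR
  have hint : (∮ w in C(0, s), (w - 0)⁻¹ • h w) = (2 * ↑π * I) • h 0 :=
    Complex.circleIntegral_sub_inv_smul_of_differentiable_on_off_countable
      Set.countable_empty (mem_ball_self hs) (hd.continuousOn.mono (closedBall_subset_ball hsR))
      (fun x hx => hd.differentiableAt
        (isOpen_ball.mem_nhds (ball_subset_ball hsR.le hx.1)))
  have h2 : (∮ w in C(0, s), (w - 0)⁻¹ • h w)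
      = I * ∫ θ in (0:ℝ)..2*π, h (circleMap 0 s θ) := by
    rw [← intervalIntegral.integral_const_mul]
    apply intervalIntegral.integral_congr
    intro θ _
    have hne : circleMap 0 s θ ≠ 0 := circleMap_ne_center hs.ne'
    simp only [deriv_circleMap, smul_eq_mul, sub_zero]
    field_simp
  have h3 : (∫ θ in (0:ℝ)..2*π, h (circleMap 0 s θ)) = (2 * ↑π) * h 0 := by
    have := hint
    rw [h2] at this
    have hI : (2 * ↑π * I) • h 0 = I * ((2 * ↑π) * h 0) := by
      rw [smul_eq_mul]; ring
    rw [hI] at this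
    exact mul_left_cancel₀ I_ne_zero this
  have h4 : ∫ θ in (0:ℝ)..2*π, (h (circleMap 0 s θ)).re
      = (∫ θ in (0:ℝ)..2*π, h (circleMap 0 s θ)).re := by
    have hii : IntervalIntegrable (fun θ : ℝ => h (circleMap 0 s θ))
        MeasureTheory.volume 0 (2*π) := hcont.intervalIntegrable _ _
    have := Complex.reCLM.intervalIntegral_comp_comm hii
    simpa using this
  rw [h4, h3]
  simp

private lemma key_estimate (R d : ℝ) (h : ℂ → ℂ) (hR : 0 < R)
    (hd : DifferentiableOn ℂ h (ball (0:ℂ) R)) (h00 : h 0 = 0)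
    (hre : ∀ w ∈ ball (0:ℂ) R, (h w).re ≤ d)
    (z : ℂ) (hz : ‖z‖ < R) (m : ℕ) :
    ‖iteratedDeriv (m+1) h z‖ ≤ 2 * (m+1).factorial * R / (R - ‖z‖) ^ (m + 2) * d := by
  set r := ‖z‖ with hrdef
  have hr0 : 0 ≤ r := norm_nonneg z
  have hd0 : 0 ≤ d := by
    have := hre 0 (mem_ball_self hR); rw [h00] at this; simpa using this
  have main : ∀ s, r < s → s < R →
      ‖iteratedDeriv (m+1) h z‖ ≤ 2 * (m+1).factorial * s * d / (s - r) ^ (m + 2) := by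
    intro s hrs hsR
    have hs : 0 < s := lt_of_le_of_lt hr0 hrs
    have hsr : 0 < s - r := by linarith
    have hsub2 : sphere (0:ℂ) s ⊆ ball (0:ℂ) R := sphere_subset_ball' hs hsR
    have hwz : ∀ w ∈ sphere (0:ℂ) s, w - z ≠ 0 := by
      intro w hw
      rw [mem_sphere_zero_iff_norm] at hw
      rw [sub_ne_zero]; rintro rfl; exact absurd hw (ne_of_lt hrs)
    have hKcont : ContinuousOn (fun w : ℂ => (w - z) ^ (-(↑(m+1)+1) : ℤ)) (sphere (0:ℂ) s) :=
      (continuousOn_id.sub continuousOn_const).zpow₀ _ (fun w hw => Or.inl (hwz w hw))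
    have hhcont : ContinuousOn h (sphere (0:ℂ) s) := hd.continuousOn.mono hsub2
    have int1 : CircleIntegrable (fun w => ((w - z) ^ (-(↑(m+1)+1) : ℤ)) • h w) 0 s :=
      (hKcont.smul hhcont).circleIntegrable hs.le
    have int2 : CircleIntegrable
        (fun w => ((w - z) ^ (-(↑(m+1)+1) : ℤ)) • (starRingEnd ℂ) (h w)) 0 s :=
      (hKcont.smul (continuous_conj.comp_continuousOn hhcont)).circleIntegrable hs.le
    have int3 : CircleIntegrable
        (fun w => ((w - z) ^ (-(↑(m+1)+1) : ℤ)) • (((2*d : ℝ)) : ℂ)) 0 s :=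
      (hKcont.smul continuousOn_const).circleIntegrable hs.le
    have A := cauchy_formula R (m+1) h hd s hs hsR z hrs
    have B := conj_integral_zero R s hs hsR h hd z hrs m
    have C : (∮ w in C(0, s), ((w - z) ^ (-(↑(m+1)+1) : ℤ)) • (((2*d : ℝ)) : ℂ)) = 0 := by
      rw [circleIntegral.integral_smul_const,
        circleIntegral.integral_sub_zpow_of_ne (by omega : (-(↑(m+1)+1) : ℤ) ≠ -1), zero_smul]
    have hE : ∀ w : ℂ, (((2*(h w).re - 2*d : ℝ)) : ℂ)
        = (h w + (starRingEnd ℂ) (h w)) - (((2*d : ℝ)) : ℂ) := by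
      intro w; rw [Complex.add_conj]; push_cast; ring
    have T : (∮ w in C(0, s),
        ((w - z) ^ (-(↑(m+1)+1) : ℤ)) • (((2*(h w).re - 2*d : ℝ)) : ℂ))
        = ((2 * (π:ℝ) * I) / (((m+1).factorial : ℕ) : ℂ)) • iteratedDeriv (m+1) h z := by
      have heq : Set.EqOn
          (fun w => ((w - z) ^ (-(↑(m+1)+1) : ℤ)) • (((2*(h w).re - 2*d : ℝ)) : ℂ))
          (fun w => (((w - z) ^ (-(↑(m+1)+1) : ℤ)) • h w
            + ((w - z) ^ (-(↑(m+1)+1) : ℤ)) • (starRingEnd ℂ) (h w))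
            - ((w - z) ^ (-(↑(m+1)+1) : ℤ)) • (((2*d : ℝ)) : ℂ))
          (sphere (0:ℂ) s) := by
        intro w _
        simp only [hE w, smul_sub, smul_add]
      have int12 : CircleIntegrable (fun w => ((w - z) ^ (-(↑(m+1)+1) : ℤ)) • h w
          + ((w - z) ^ (-(↑(m+1)+1) : ℤ)) • (starRingEnd ℂ) (h w)) 0 s := int1.add int2
      rw [circleIntegral.integral_congr hs.le heq,
        circleIntegral.integral_sub int12 int3,
        circleIntegral_add int1 int2, A, B, C]
      simp
    -- norm bound on the integral
    have bound : ∀ θ : ℝ,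
        ‖deriv (circleMap 0 s) θ • ((circleMap 0 s θ - z) ^ (-(↑(m+1)+1) : ℤ)) •
          (((2*(h (circleMap 0 s θ)).re - 2*d : ℝ)) : ℂ)‖
        ≤ s / (s - r) ^ (m+2) * (2*d - 2*(h (circleMap 0 s θ)).re) := by
      intro θ
      set w := circleMap 0 s θ with hwdef
      have hwnorm : ‖w‖ = s := by
        rw [hwdef, norm_circleMap_zero, abs_of_pos hs]
      have hwball : w ∈ ball (0:ℂ) R := hsub2 (by rw [mem_sphere_zero_iff_norm]; exact hwnorm)
      have hrew : (h w).re ≤ d := hre w hwball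
      have hwzn : s - r ≤ ‖w - z‖ := by
        calc s - r = ‖w‖ - ‖z‖ := by rw [hwnorm]
          _ ≤ ‖w - z‖ := norm_sub_norm_le w z
      have hKnorm : ‖(w - z) ^ (-(↑(m+1)+1) : ℤ)‖ ≤ ((s - r) ^ (m+2))⁻¹ := by
        have he : (-(↑(m+1)+1) : ℤ) = -((m+2 : ℕ) : ℤ) := by push_cast; ring
        rw [he, zpow_neg, zpow_natCast, norm_inv, norm_pow]
        apply inv_anti₀ (by positivity)
        exact pow_le_pow_left₀ hsr.le hwzn _
      have hEnorm : ‖(((2*(h w).re - 2*d : ℝ)) : ℂ)‖ = 2*d - 2*(h w).re := by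
        rw [Complex.norm_real, Real.norm_eq_abs, abs_of_nonpos (by linarith)]
        ring
      have hderiv : ‖deriv (circleMap 0 s) θ‖ = s := by
        rw [deriv_circleMap, norm_mul, Complex.norm_I, mul_one, ← hwdef, hwnorm]
      rw [norm_smul, norm_smul, hderiv, hEnorm]
      have h1 : ‖(w - z) ^ (-(↑(m+1)+1) : ℤ)‖ * (2*d - 2*(h w).re)
          ≤ ((s - r) ^ (m+2))⁻¹ * (2*d - 2*(h w).re) :=
        mul_le_mul_of_nonneg_right hKnorm (by linarith)
      calc s * (‖(w - z) ^ (-(↑(m+1)+1) : ℤ)‖ * (2*d - 2*(h w).re))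
          ≤ s * (((s - r) ^ (m+2))⁻¹ * (2*d - 2*(h w).re)) :=
            mul_le_mul_of_nonneg_left h1 hs.le
        _ = s / (s - r) ^ (m+2) * (2*d - 2*(h w).re) := by ring
    have hcirc_cont : Continuous fun θ : ℝ => h (circleMap 0 s θ) := by
      rw [← continuousOn_univ]
      apply hd.continuousOn.comp (continuous_circleMap 0 s).continuousOn
      intro θ _
      exact hsub2 (circleMap_mem_sphere 0 hs.le θ)
    have hKcont' : Continuous fun θ : ℝ => (circleMap 0 s θ - z) ^ (-(↑(m+1)+1) : ℤ) := by
      apply Continuous.zpow₀ ((continuous_circleMap 0 s).sub continuous_const)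
      intro θ
      exact Or.inl (hwz _ (circleMap_mem_sphere 0 hs.le θ))
    have hintg_cont : Continuous fun θ : ℝ =>
        deriv (circleMap 0 s) θ • ((circleMap 0 s θ - z) ^ (-(↑(m+1)+1) : ℤ)) •
          (((2*(h (circleMap 0 s θ)).re - 2*d : ℝ)) : ℂ) := by
      simp only [deriv_circleMap]
      apply Continuous.smul ((continuous_circleMap 0 s).mul continuous_const)
      apply Continuous.smul hKcont'
      exact Complex.continuous_ofReal.comp
        ((continuous_const.mul (Complex.continuous_re.comp hcirc_cont)).sub continuous_const)
    have hnorm : ‖(∮ w in C(0, s),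
        ((w - z) ^ (-(↑(m+1)+1) : ℤ)) • (((2*(h w).re - 2*d : ℝ)) : ℂ))‖
        ≤ s / (s - r) ^ (m+2) * (4*π*d) := by
      calc ‖(∮ w in C(0, s),
          ((w - z) ^ (-(↑(m+1)+1) : ℤ)) • (((2*(h w).re - 2*d : ℝ)) : ℂ))‖
          ≤ ∫ θ in (0:ℝ)..2*π, ‖deriv (circleMap 0 s) θ •
            ((circleMap 0 s θ - z) ^ (-(↑(m+1)+1) : ℤ)) •
            (((2*(h (circleMap 0 s θ)).re - 2*d : ℝ)) : ℂ)‖ :=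
            intervalIntegral.norm_integral_le_integral_norm (by positivity)
        _ ≤ ∫ θ in (0:ℝ)..2*π,
            s / (s - r) ^ (m+2) * (2*d - 2*(h (circleMap 0 s θ)).re) := by
            apply intervalIntegral.integral_mono_on (by positivity)
            · exact (hintg_cont.norm).intervalIntegrable _ _
            · exact ((continuous_const.mul ((continuous_const.sub
                (continuous_const.mul (Complex.continuous_re.comp hcirc_cont))))).intervalIntegrable _ _)
            · intro θ _; exact bound θ
        _ = s / (s - r) ^ (m+2) * (4*π*d) := by
            rw [intervalIntegral.integral_const_mul]
            congr 1
            have hint_re : IntervalIntegrable (fun θ : ℝ => 2*(h (circleMap 0 s θ)).re)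
                MeasureTheory.volume 0 (2*π) := by
              exact (continuous_const.mul
                (Complex.continuous_re.comp hcirc_cont)).intervalIntegrable _ _
            rw [intervalIntegral.integral_sub intervalIntegrable_const hint_re,
              intervalIntegral.integral_const, intervalIntegral.integral_const_mul,
              mean_value'' R s hs hsR h hd, h00]
            simp
            ring
    rw [T] at hnorm
    rw [norm_smul] at hnorm
    have hfacnorm : ‖((2 * (π:ℝ) * I) / (((m+1).factorial : ℕ) : ℂ))‖
        = 2*π / ((m+1).factorial : ℝ) := by
      rw [norm_div, norm_mul, norm_mul, Complex.norm_I, mul_one, Complex.norm_natCast]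
      norm_num [Complex.norm_real, Real.norm_eq_abs, _root_.abs_of_nonneg Real.pi_pos.le]
    rw [hfacnorm] at hnorm
    set X := ‖iteratedDeriv (m+1) h z‖ with hXdef
    have hfacpos : (0:ℝ) < ((m+1).factorial : ℝ) := by positivity
    have hXnn : 0 ≤ X := norm_nonneg _
    calc X = (((m+1).factorial : ℝ) / (2*π)) * (2*π / ((m+1).factorial : ℝ) * X) := by
          field_simp
      _ ≤ (((m+1).factorial : ℝ) / (2*π)) * (s / (s - r) ^ (m+2) * (4*π*d)) := by
          apply mul_le_mul_of_nonneg_left hnorm (by positivity)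
      _ = 2 * (m+1).factorial * s * d / (s - r) ^ (m + 2) := by
          field_simp
          ring
  -- limit s → R
  have hcont : ContinuousAt (fun s : ℝ => 2 * ((m+1).factorial : ℝ) * s * d / (s - r) ^ (m + 2)) R := by
    apply ContinuousAt.div
    · fun_prop
    · fun_prop
    · exact pow_ne_zero _ (ne_of_gt (by linarith))
  have htend : Filter.Tendsto (fun s : ℝ => 2 * ((m+1).factorial : ℝ) * s * d / (s - r) ^ (m + 2))
      (nhdsWithin R (Set.Iio R)) (nhds (2 * ((m+1).factorial : ℝ) * R * d / (R - r) ^ (m + 2))) :=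
    hcont.continuousWithinAt
  have hev : ∀ᶠ s in nhdsWithin R (Set.Iio R),
      ‖iteratedDeriv (m+1) h z‖ ≤ 2 * ((m+1).factorial : ℝ) * s * d / (s - r) ^ (m + 2) := by
    filter_upwards [Ioo_mem_nhdsLT hz] with s hs
    exact main s hs.1 hs.2
  have := ge_of_tendsto htend hev
  calc ‖iteratedDeriv (m+1) h z‖ ≤ 2 * ((m+1).factorial : ℝ) * R * d / (R - r) ^ (m + 2) := this
    _ = 2 * (m+1).factorial * R / (R - r) ^ (m + 2) * d := by ring

theorem stmt4 (R r : ℝ) (f : ℂ → ℂ) (G : Set ℂ)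
    (hR : 0 < R) (hr : 0 ≤ r) (h3 : r < R)
    (hG : IsOpen G) (hGconn : IsConnected G)
    (hhull : convexHull ℝ G ≠ Set.univ)
    (hf : DifferentiableOn ℂ f (ball 0 R))
    (hmaps : Set.MapsTo f (ball 0 R) G)
    (z : ℂ) (hz : ‖z‖ = r)
    (n : ℕ) (hn : 1 ≤ n) :
    ‖iteratedDeriv n f z‖ ≤
      2 * n.factorial * R / (R - r) ^ (n + 1) *
        infDist (f 0) (frontier (convexHull ℝ G)) := by
  subst hz
  obtain ⟨m, rfl⟩ : ∃ m, n = m + 1 := ⟨n - 1, by omega⟩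
  set H := convexHull ℝ G with hHdef
  set d := infDist (f 0) (frontier H) with hddef
  have hzR : ‖z‖ < R := h3
  have hf0G : f 0 ∈ G := hmaps (mem_ball_self hR)
  have hHne : H.Nonempty := hGconn.nonempty.mono (subset_convexHull ℝ G)
  have hfrne : (frontier H).Nonempty := nonempty_frontier_iff.mpr ⟨hHne, hhull⟩
  obtain ⟨p, hpF, hpd⟩ := isClosed_frontier.exists_infDist_eq_dist hfrne (f 0)
  have hpnot : p ∉ interior H := by
    intro hin
    have := closure_diff_interior H ▸ hpF
    exact this.2 hin
  have hGsub : G ⊆ interior H := interior_maximal (subset_convexHull ℝ G) hG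
  obtain ⟨g, hg⟩ := geometric_hahn_banach_open_point
    ((convex_convexHull ℝ G).interior) isOpen_interior hpnot
  set u : ℂ := (↑(g 1) + ↑(g I) * I : ℂ) with hudef
  have gdecomp : ∀ w : ℂ, g w = w.re * g 1 + w.im * g I := by
    intro w
    have h1 : (↑w.re : ℂ) = w.re • (1:ℂ) := by simp [Complex.real_smul]
    have h2 : (↑w.im : ℂ) * I = w.im • I := by simp [Complex.real_smul]
    calc g w = g (↑w.re + ↑w.im * I) := by rw [Complex.re_add_im]
      _ = g (w.re • (1:ℂ)) + g (w.im • I) := by rw [← h1, ← h2, map_add]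
      _ = w.re * g 1 + w.im * g I := by rw [map_smul, map_smul]; simp
  have glin : ∀ w : ℂ, ((starRingEnd ℂ) u * w).re = g w := by
    intro w
    rw [gdecomp w]
    simp [hudef, Complex.mul_re]
    ring
  have hu0 : u ≠ 0 := by
    intro hcon
    have hg10 : g 1 = 0 := by
      have := congrArg Complex.re hcon; simpa [hudef] using this
    have hgI0 : g I = 0 := by
      have := congrArg Complex.im hcon; simpa [hudef] using this
    have h1 := hg (f 0) (hGsub hf0G)
    rw [gdecomp (f 0), gdecomp p, hg10, hgI0] at h1
    simp at h1
  set c := ‖u‖ with hcdef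
  have hc : 0 < c := norm_pos_iff.2 hu0
  set α : ℂ := (starRingEnd ℂ) u / (c : ℂ) with hαdef
  have hα : ‖α‖ = 1 := by
    rw [hαdef, norm_div, RCLike.norm_conj, Complex.norm_real, Real.norm_eq_abs,
      _root_.abs_of_pos hc, ← hcdef, div_self hc.ne']
  set hfun : ℂ → ℂ := fun x => α * (f x - f 0) with hfundef
  have h00 : hfun 0 = 0 := by simp [hfundef]
  have hdf : DifferentiableOn ℂ hfun (ball (0:ℂ) R) := fun x hx =>
    ((hf x hx).sub (differentiableWithinAt_const _)).const_mul α
  have hd0 : 0 ≤ d := infDist_nonneg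
  have hsep : ∀ y ∈ G, g y - g (f 0) < c * d := by
    intro y hy
    have h1 : g y < g p := hg y (hGsub hy)
    have h2 : g p - g (f 0) ≤ c * d := by
      have e1 : g p - g (f 0) = ((starRingEnd ℂ) u * (p - f 0)).re := by
        rw [glin, map_sub]
      have e2 : ((starRingEnd ℂ) u * (p - f 0)).re ≤ ‖(starRingEnd ℂ) u * (p - f 0)‖ := by
        exact Complex.re_le_norm _
      have e3 : ‖(starRingEnd ℂ) u * (p - f 0)‖ = c * d := by
        rw [norm_mul, RCLike.norm_conj, hddef, hpd, dist_eq_norm, norm_sub_rev]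
      linarith
    linarith
  have hred : ∀ w ∈ ball (0:ℂ) R, (hfun w).re ≤ d := by
    intro x hx
    have hy : f x ∈ G := hmaps hx
    have h3' : (hfun x).re = (g (f x) - g (f 0)) / c := by
      have e1 : hfun x = ((starRingEnd ℂ) u * (f x - f 0)) / (c:ℂ) := by
        rw [hfundef, hαdef]; ring
      rw [e1, Complex.div_ofReal_re, glin, map_sub]
    rw [h3', div_le_iff₀ hc]
    have := hsep (f x) hy
    linarith
  have hkey := key_estimate R d hfun hR hdf h00 hred z hzR m
  set s₀ := (‖z‖ + R)/2 with hs₀def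
  have hs₀pos : 0 < s₀ := by positivity
  have hzs₀ : ‖z‖ < s₀ := by rw [hs₀def]; linarith
  have hs₀R : s₀ < R := by rw [hs₀def]; linarith [norm_nonneg z]
  have A1 := cauchy_formula R (m+1) f hf s₀ hs₀pos hs₀R z hzs₀
  have A2 := cauchy_formula R (m+1) hfun hdf s₀ hs₀pos hs₀R z hzs₀
  have hsub2 : sphere (0:ℂ) s₀ ⊆ ball (0:ℂ) R := sphere_subset_ball' hs₀pos hs₀R
  have hwz : ∀ w ∈ sphere (0:ℂ) s₀, w - z ≠ 0 := by
    intro w hw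
    rw [mem_sphere_zero_iff_norm] at hw
    rw [sub_ne_zero]; rintro rfl; exact absurd hw (ne_of_lt hzs₀)
  have hKcont : ContinuousOn (fun w : ℂ => (w - z) ^ (-(↑(m+1)+1) : ℤ)) (sphere (0:ℂ) s₀) :=
    (continuousOn_id.sub continuousOn_const).zpow₀ _ (fun w hw => Or.inl (hwz w hw))
  have intf : CircleIntegrable (fun w => ((w - z) ^ (-(↑(m+1)+1) : ℤ)) • f w) 0 s₀ :=
    (hKcont.smul (hf.continuousOn.mono hsub2)).circleIntegrable hs₀pos.le
  have intaf : CircleIntegrable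
      (fun w => α • (((w - z) ^ (-(↑(m+1)+1) : ℤ)) • f w)) 0 s₀ :=
    (continuousOn_const.fun_smul (hKcont.fun_smul (hf.continuousOn.mono hsub2))).circleIntegrable hs₀pos.le
  have intK : CircleIntegrable
      (fun w : ℂ => (α * f 0) • ((w - z) ^ (-(↑(m+1)+1) : ℤ))) 0 s₀ :=
    (continuousOn_const.fun_smul hKcont).circleIntegrable hs₀pos.le
  have heq : Set.EqOn (fun w => ((w - z) ^ (-(↑(m+1)+1) : ℤ)) • hfun w)
      (fun w => α • (((w - z) ^ (-(↑(m+1)+1) : ℤ)) • f w)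
        - (α * f 0) • ((w - z) ^ (-(↑(m+1)+1) : ℤ))) (sphere (0:ℂ) s₀) := by
    intro w _
    simp only [hfundef, smul_eq_mul]
    ring
  have A3 : (∮ w in C(0, s₀), ((w - z) ^ (-(↑(m+1)+1) : ℤ)) • hfun w)
      = α • ∮ w in C(0, s₀), ((w - z) ^ (-(↑(m+1)+1) : ℤ)) • f w := by
    rw [circleIntegral.integral_congr hs₀pos.le heq,
      circleIntegral.integral_sub intaf intK,
      circleIntegral.integral_smul, circleIntegral.integral_smul,
      circleIntegral.integral_sub_zpow_of_ne (by omega : (-(↑(m+1)+1) : ℤ) ≠ -1),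
      smul_zero, sub_zero]
  have hiD : iteratedDeriv (m+1) hfun z = α * iteratedDeriv (m+1) f z := by
    have hc₀ : ((2 * (π:ℝ) * I) / (((m+1).factorial : ℕ) : ℂ)) ≠ 0 := by
      apply div_ne_zero
      · simp [Real.pi_ne_zero, I_ne_zero]
      · exact_mod_cast Nat.cast_ne_zero.mpr (Nat.factorial_ne_zero (m+1))
    rw [A3, A1] at A2
    simp only [smul_eq_mul] at A2
    apply mul_left_cancel₀ hc₀
    linear_combination -A2
  calc ‖iteratedDeriv (m+1) f z‖ = ‖iteratedDeriv (m+1) hfun z‖ := by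
        rw [hiD, norm_mul, hα, one_mul]
    _ ≤ 2 * (m+1).factorial * R / (R - ‖z‖) ^ (m + 2) * d := hkey
    _ = 2 * (m+1).factorial * R / (R - ‖z‖) ^ (m + 1 + 1) * d := by norm_num
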